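/- Let q be a prime power, 0 < δ < 1/6, and A ⊆ F_q \ {0} with |A| = q^{1/2+δ}. Then |A + A·A| > (1/2)·q^{1/2+3δ}. -/

import Mathlib

open scoped BigOperators
open Finset

section AuxChar

variable {F : Type*} [Field F] [Fintype F] [DecidableEq F]

/-- Orthogonality-based character count: for any finite family `f p`, `p ∈ T`, we have
`∑_x |∑_p ψ(x f p)|² = q · #{(p,r) : f p = f r}`. -/
lemma char_key (ψ : AddChar F ℂ) (hψ : ψ.IsPrimitive) {ι : Type*}
    (T : Finset ι) (f : ι → F) :
    ∑ x : F, Complex.normSq (∑ p ∈ T, ψ (x * f p)) =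
      (Fintype.card F : ℝ) * ∑ p ∈ T, ∑ r ∈ T, (if f p = f r then (1 : ℝ) else 0) := by
  have h1 : ∀ x : F, (∑ p ∈ T, ψ (x * f p)) * (starRingEnd ℂ) (∑ p ∈ T, ψ (x * f p)) =
      ∑ p ∈ T, ∑ r ∈ T, ψ (x * (f p - f r)) := by
    intro x
    rw [map_sum, Finset.sum_mul_sum]
    refine Finset.sum_congr rfl fun p _ => Finset.sum_congr rfl fun r _ => ?_
    rw [← AddChar.map_neg_eq_conj, ← AddChar.map_add_eq_mul]
    congr 1
    ring
  have hC : ∑ x : F, ((∑ p ∈ T, ψ (x * f p)) * (starRingEnd ℂ) (∑ p ∈ T, ψ (x * f p))) =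
      (Fintype.card F : ℂ) * ∑ p ∈ T, ∑ r ∈ T, (if f p = f r then (1 : ℂ) else 0) := by
    calc ∑ x : F, ((∑ p ∈ T, ψ (x * f p)) * (starRingEnd ℂ) (∑ p ∈ T, ψ (x * f p)))
        = ∑ x : F, ∑ p ∈ T, ∑ r ∈ T, ψ (x * (f p - f r)) :=
          Finset.sum_congr rfl fun x _ => h1 x
      _ = ∑ p ∈ T, ∑ x : F, ∑ r ∈ T, ψ (x * (f p - f r)) := Finset.sum_comm
      _ = ∑ p ∈ T, ∑ r ∈ T, ∑ x : F, ψ (x * (f p - f r)) :=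
          Finset.sum_congr rfl fun p _ => Finset.sum_comm
      _ = ∑ p ∈ T, ∑ r ∈ T, (if f p = f r then (Fintype.card F : ℂ) else 0) := by
          refine Finset.sum_congr rfl fun p _ => Finset.sum_congr rfl fun r _ => ?_
          rw [AddChar.sum_mulShift _ hψ]
          simp only [Nat.cast_ite, Nat.cast_zero, sub_eq_zero]
      _ = (Fintype.card F : ℂ) * ∑ p ∈ T, ∑ r ∈ T, (if f p = f r then (1 : ℂ) else 0) := by
          simp only [Finset.mul_sum, mul_ite, mul_one, mul_zero]
  simp_rw [Complex.mul_conj] at hC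
  have key : ((∑ x : F, Complex.normSq (∑ p ∈ T, ψ (x * f p)) : ℝ) : ℂ) =
      (((Fintype.card F : ℝ) * ∑ p ∈ T, ∑ r ∈ T, (if f p = f r then (1 : ℝ) else 0) : ℝ) : ℂ) := by
    push_cast
    rw [hC]
    congr 1
    refine Finset.sum_congr rfl fun p _ => ?_
    push_cast
    refine Finset.sum_congr rfl fun r _ => ?_
    split <;> simp
  exact_mod_cast key

end AuxChar

set_option maxHeartbeats 1600000 in
/-- Sum-product for large sets in finite fields: if `A ⊆ F_q \ {0}` and
`|A| = q^{1/2+δ}` with `0 < δ < 1/6`, then `|A + A·A| > (1/2)·q^{1/2+3δ}`. -/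
theorem sum_product_medium_sets
    {F : Type*} [Field F] [Fintype F] [DecidableEq F]
    (δ : ℝ) (hδ : 0 < δ) (hδ' : δ < 1 / 6)
    (A : Finset F) (hA0 : (0 : F) ∉ A)
    (hA : (A.card : ℝ) = (Fintype.card F : ℝ) ^ ((1 : ℝ) / 2 + δ)) :
    ((Finset.image₂ (· + ·) A (Finset.image₂ (· * ·) A A)).card : ℝ) >
      (1 / 2) * (Fintype.card F : ℝ) ^ ((1 : ℝ) / 2 + 3 * δ) := by
  classical
  obtain ⟨ψ, hψ⟩ : ∃ ψ : AddChar F ℂ, ψ.IsPrimitive :=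
    ⟨_, AddChar.FiniteField.primitiveChar_to_Complex_isPrimitive F⟩
  set q : ℝ := (Fintype.card F : ℝ) with hqdef
  have hq1 : (1 : ℝ) < q := by
    rw [hqdef]; exact_mod_cast Fintype.one_lt_card
  have hq0 : (0 : ℝ) < q := lt_trans one_pos hq1
  have hq0' : (0 : ℝ) ≤ q := le_of_lt hq0
  set α : ℝ := (A.card : ℝ) with hαdef
  have hα0 : (0 : ℝ) < α := by rw [hA]; exact Real.rpow_pos_of_pos hq0 _
  set T : Finset (F × F × F) := A ×ˢ A ×ˢ A with hTdef
  set f : F × F × F → F := fun p => p.1 + p.2.1 * p.2.2 with hfdef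
  set S : Finset F := Finset.image₂ (· + ·) A (Finset.image₂ (· * ·) A A) with hSdef
  have hTS : T.image f = S := by
    ext y
    simp only [hTdef, hfdef, hSdef, Finset.mem_image, Finset.mem_image₂,
      Finset.mem_product, Prod.exists]
    constructor
    · rintro ⟨a, b, c, ⟨ha, hb, hc⟩, rfl⟩
      exact ⟨a, ha, b * c, ⟨b, hb, c, hc, rfl⟩, rfl⟩
    · rintro ⟨a, ha, z, ⟨b, hb, c, hc, rfl⟩, rfl⟩
      exact ⟨a, b, c, ⟨ha, hb, hc⟩, rfl⟩
  have hmemS : ∀ p ∈ T, f p ∈ S := fun p hp => hTS ▸ Finset.mem_image_of_mem f hp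
  have hTcard : (T.card : ℝ) = α ^ 3 := by
    rw [hTdef, hαdef]
    simp only [Finset.card_product]
    push_cast
    ring
  -- fiber counts
  set r : F → ℕ := fun l => (T.filter fun p => f p = l).card with hrdef
  have hsum_r : ∑ l ∈ S, (r l : ℝ) = α ^ 3 := by
    have hnat : T.card = ∑ l ∈ S, r l := by
      rw [hrdef]; exact Finset.card_eq_sum_card_fiberwise hmemS
    rw [← hTcard, hnat]
    push_cast
    rfl
  -- double count is sum of squared fiber counts
  have hE : ∑ p ∈ T, ∑ p' ∈ T, (if f p = f p' then (1 : ℝ) else 0) =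
      ∑ l ∈ S, (r l : ℝ) ^ 2 := by
    have h1 : ∀ p ∈ T, ∑ p' ∈ T, (if f p = f p' then (1 : ℝ) else 0) = (r (f p) : ℝ) := by
      intro p _
      rw [Finset.sum_ite, Finset.sum_const, Finset.sum_const_zero, add_zero, nsmul_eq_mul,
        mul_one, hrdef]
      norm_cast
      exact congrArg Finset.card (Finset.filter_congr fun x _ => by rw [eq_comm])
    rw [Finset.sum_congr rfl h1, Finset.sum_comp (fun l => ((r l : ℝ))) f, hTS]
    refine Finset.sum_congr rfl fun l _ => ?_
    simp only [hrdef, nsmul_eq_mul]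
    ring
  -- main character identity
  have hqE : q * ∑ l ∈ S, (r l : ℝ) ^ 2 =
      ∑ x : F, Complex.normSq (∑ p ∈ T, ψ (x * f p)) := by
    rw [char_key ψ hψ T f, hE]
  -- factorization of the character sum
  have hfact : ∀ x : F, (∑ p ∈ T, ψ (x * f p)) =
      (∑ a ∈ A, ψ (x * a)) * (∑ p ∈ A ×ˢ A, ψ (p.1 * (x * p.2))) := by
    intro x
    rw [hTdef, Finset.sum_product, Finset.sum_mul]
    refine Finset.sum_congr rfl fun a _ => ?_
    rw [Finset.mul_sum, Finset.sum_product]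
    rw [Finset.sum_product]
    refine Finset.sum_congr rfl fun b _ => Finset.sum_congr rfl fun c _ => ?_
    rw [← AddChar.map_add_eq_mul]
    congr 1
    simp only [hfdef]
    ring
  -- A-side second moment
  have hAside : ∑ x : F, Complex.normSq (∑ a ∈ A, ψ (x * a)) = q * α := by
    have hck := char_key ψ hψ A (fun a => a)
    simp only [hqdef, hαdef] at hck ⊢
    rw [hck]
    congr 1
    rw [Finset.sum_congr rfl (fun a (_ : a ∈ A) => Finset.sum_ite_eq A a (fun _ => (1:ℝ)))]
    simp
  -- B-side pointwise bound for x ≠ 0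
  have hBside : ∀ x : F, x ≠ 0 →
      Complex.normSq (∑ p ∈ A ×ˢ A, ψ (p.1 * (x * p.2))) ≤ q * α ^ 2 := by
    intro x hx
    set g : F → ℂ := fun b => ∑ c ∈ A, ψ (b * (x * c)) with hgdef
    have hBg : (∑ p ∈ A ×ˢ A, ψ (p.1 * (x * p.2))) = ∑ b ∈ A, g b := by
      rw [Finset.sum_product, hgdef]
    have hnorm : ‖∑ b ∈ A, g b‖ ≤ ∑ b ∈ A, ‖g b‖ := norm_sum_le _ _
    have hCS : (∑ b ∈ A, ‖g b‖) ^ 2 ≤ α * ∑ b ∈ A, ‖g b‖ ^ 2 := by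
      have h := sq_sum_le_card_mul_sum_sq (s := A) (f := fun b => ‖g b‖)
      rw [hαdef]
      exact_mod_cast h
    have hext : ∑ b ∈ A, ‖g b‖ ^ 2 ≤ ∑ b : F, ‖g b‖ ^ 2 :=
      Finset.sum_le_sum_of_subset_of_nonneg (Finset.subset_univ A)
        (fun _ _ _ => by positivity)
    have hgsum : ∑ b : F, ‖g b‖ ^ 2 = q * α := by
      have hck := char_key ψ hψ A (fun c => x * c)
      have hdiag : ∑ c ∈ A, ∑ c' ∈ A, (if x * c = x * c' then (1 : ℝ) else 0) = α := by
        have heq : ∀ c ∈ A, ∑ c' ∈ A, (if x * c = x * c' then (1 : ℝ) else 0) = 1 := by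
          intro c hc
          have hiff : ∀ c' : F, (x * c = x * c') = (c = c') := fun c' => by
            rw [eq_iff_iff]; exact mul_right_inj' hx
          simp_rw [hiff]
          rw [Finset.sum_ite_eq A c (fun _ => (1:ℝ))]
          simp [hc]
        rw [Finset.sum_congr rfl heq, hαdef]
        simp
      calc ∑ b : F, ‖g b‖ ^ 2 = ∑ b : F, Complex.normSq (g b) := by
            refine Finset.sum_congr rfl fun b _ => ?_
            rw [Complex.normSq_eq_norm_sq]
        _ = q * α := by rw [hgdef]; rw [hck, hdiag]
    have hB2 : Complex.normSq (∑ b ∈ A, g b) ≤ α * (q * α) := by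
      rw [Complex.normSq_eq_norm_sq]
      calc ‖∑ b ∈ A, g b‖ ^ 2 ≤ (∑ b ∈ A, ‖g b‖) ^ 2 :=
            pow_le_pow_left₀ (norm_nonneg _) hnorm 2
        _ ≤ α * ∑ b ∈ A, ‖g b‖ ^ 2 := hCS
        _ ≤ α * ∑ b : F, ‖g b‖ ^ 2 := mul_le_mul_of_nonneg_left hext (le_of_lt hα0)
        _ = α * (q * α) := by rw [hgsum]
    rw [hBg]
    calc Complex.normSq (∑ b ∈ A, g b) ≤ α * (q * α) := hB2
      _ = q * α ^ 2 := by ring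
  -- energy bound
  have hEnergy : q * ∑ l ∈ S, (r l : ℝ) ^ 2 ≤ α ^ 6 + q ^ 2 * α ^ 3 := by
    rw [hqE]
    have hsplit : ∑ x : F, Complex.normSq (∑ p ∈ T, ψ (x * f p)) =
        Complex.normSq (∑ p ∈ T, ψ ((0 : F) * f p)) +
          ∑ x ∈ Finset.univ.erase (0 : F), Complex.normSq (∑ p ∈ T, ψ (x * f p)) :=
      (Finset.add_sum_erase Finset.univ _ (Finset.mem_univ 0)).symm
    rw [hsplit]
    have h0term : Complex.normSq (∑ p ∈ T, ψ ((0 : F) * f p)) = α ^ 6 := by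
      have hone : (∑ p ∈ T, ψ ((0 : F) * f p)) = (T.card : ℂ) := by
        rw [Finset.sum_congr rfl fun p _ => by rw [zero_mul, AddChar.map_zero_eq_one]]
        simp
      rw [hone, Complex.normSq_natCast]
      have : ((T.card : ℝ)) * ((T.card : ℝ)) = α ^ 6 := by rw [hTcard]; ring
      exact_mod_cast this
    have hrest : ∑ x ∈ Finset.univ.erase (0 : F), Complex.normSq (∑ p ∈ T, ψ (x * f p)) ≤
        q ^ 2 * α ^ 3 := by
      have hbound : ∀ x ∈ Finset.univ.erase (0 : F),
          Complex.normSq (∑ p ∈ T, ψ (x * f p)) ≤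
            (q * α ^ 2) * Complex.normSq (∑ a ∈ A, ψ (x * a)) := by
        intro x hx
        have hxne : x ≠ 0 := (Finset.mem_erase.mp hx).1
        rw [hfact x, Complex.normSq_mul]
        have hb := hBside x hxne
        have hnn : (0:ℝ) ≤ Complex.normSq (∑ a ∈ A, ψ (x * a)) := Complex.normSq_nonneg _
        calc Complex.normSq (∑ a ∈ A, ψ (x * a)) *
              Complex.normSq (∑ p ∈ A ×ˢ A, ψ (p.1 * (x * p.2)))
            ≤ Complex.normSq (∑ a ∈ A, ψ (x * a)) * (q * α ^ 2) :=
              mul_le_mul_of_nonneg_left hb hnn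
          _ = (q * α ^ 2) * Complex.normSq (∑ a ∈ A, ψ (x * a)) := by ring
      calc ∑ x ∈ Finset.univ.erase (0 : F), Complex.normSq (∑ p ∈ T, ψ (x * f p))
          ≤ ∑ x ∈ Finset.univ.erase (0 : F),
              (q * α ^ 2) * Complex.normSq (∑ a ∈ A, ψ (x * a)) :=
            Finset.sum_le_sum hbound
        _ = (q * α ^ 2) * ∑ x ∈ Finset.univ.erase (0 : F),
              Complex.normSq (∑ a ∈ A, ψ (x * a)) := by rw [Finset.mul_sum]
        _ ≤ (q * α ^ 2) * ∑ x : F, Complex.normSq (∑ a ∈ A, ψ (x * a)) := by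
            refine mul_le_mul_of_nonneg_left ?_ (mul_nonneg hq0' (by positivity))
            exact Finset.sum_le_sum_of_subset_of_nonneg (Finset.erase_subset _ _)
              (fun _ _ _ => Complex.normSq_nonneg _)
        _ = (q * α ^ 2) * (q * α) := by rw [hAside]
        _ = q ^ 2 * α ^ 3 := by ring
    rw [h0term]
    linarith
  -- Cauchy–Schwarz
  have hCS2 : α ^ 6 ≤ (S.card : ℝ) * ∑ l ∈ S, (r l : ℝ) ^ 2 := by
    have h := sq_sum_le_card_mul_sum_sq (s := S) (f := fun l => (r l : ℝ))
    rw [hsum_r] at h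
    calc α ^ 6 = (α ^ 3) ^ 2 := by ring
      _ ≤ (S.card : ℝ) * ∑ l ∈ S, (r l : ℝ) ^ 2 := by exact_mod_cast h
  -- endgame
  set En : ℝ := ∑ l ∈ S, (r l : ℝ) ^ 2 with hEndef
  set s : ℝ := (S.card : ℝ) with hsdef
  have hEn0 : 0 < En := by
    by_contra h
    push_neg at h
    have hs0 : (0:ℝ) ≤ s := by rw [hsdef]; positivity
    have hsEn : s * En ≤ 0 := mul_nonpos_of_nonneg_of_nonpos hs0 h
    nlinarith [pow_pos hα0 6]
  have hs0 : 0 < s := by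
    have hsEn : 0 < s * En := lt_of_lt_of_le (pow_pos hα0 6) hCS2
    rcases mul_pos_iff.mp hsEn with h | h
    · exact h.1
    · linarith [h.2]
  have hkey : q * α ^ 6 ≤ s * (α ^ 6 + q ^ 2 * α ^ 3) := by
    have h1 : q * α ^ 6 ≤ q * (s * En) := mul_le_mul_of_nonneg_left hCS2 hq0'
    have h3 : s * (q * En) ≤ s * (α ^ 6 + q ^ 2 * α ^ 3) :=
      mul_le_mul_of_nonneg_left hEnergy (le_of_lt hs0)
    nlinarith
  -- rpow computations
  have hα3 : α ^ 3 = q ^ (((1:ℝ) / 2 + δ) * 3) := by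
    rw [hA, Real.rpow_mul hq0', ← Real.rpow_natCast (q ^ ((1:ℝ)/2 + δ)) 3]
    norm_num
  have hα6 : α ^ 6 = q ^ (((1:ℝ) / 2 + δ) * 6) := by
    rw [hA, Real.rpow_mul hq0', ← Real.rpow_natCast (q ^ ((1:ℝ)/2 + δ)) 6]
    norm_num
  have hq2 : q ^ (2:ℕ) = q ^ ((2:ℝ)) := by
    rw [← Real.rpow_natCast q 2]
    norm_num
  have hadd : ∀ a b : ℝ, q ^ a * q ^ b = q ^ (a + b) := fun a b =>
    (Real.rpow_add hq0 a b).symm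
  have hden : (0:ℝ) < α ^ 6 + q ^ 2 * α ^ 3 :=
    add_pos (pow_pos hα0 6) (mul_pos (pow_pos hq0 2) (pow_pos hα0 3))
  have hstrict : (1 / 2) * q ^ ((1:ℝ) / 2 + 3 * δ) * (α ^ 6 + q ^ 2 * α ^ 3) < q * α ^ 6 := by
    have hA6 : q * α ^ 6 = q ^ ((4:ℝ) + 6 * δ) := by
      rw [hα6]
      nth_rewrite 1 [← Real.rpow_one q]
      rw [hadd]
      congr 1
      ring
    have hT1 : q ^ ((1:ℝ) / 2 + 3 * δ) * α ^ 6 = q ^ ((7:ℝ)/2 + 9 * δ) := by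
      rw [hα6, hadd]
      congr 1
      ring
    have hT2 : q ^ ((1:ℝ) / 2 + 3 * δ) * (q ^ 2 * α ^ 3) = q ^ ((4:ℝ) + 6 * δ) := by
      rw [hα3, hq2, hadd, hadd]
      congr 1
      ring
    have hlt : q ^ ((7:ℝ)/2 + 9 * δ) < q ^ ((4:ℝ) + 6 * δ) :=
      (Real.rpow_lt_rpow_left_iff hq1).mpr (by linarith)
    have hexpand : (1 / 2) * q ^ ((1:ℝ) / 2 + 3 * δ) * (α ^ 6 + q ^ 2 * α ^ 3) =
        1 / 2 * (q ^ ((1:ℝ) / 2 + 3 * δ) * α ^ 6) +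
          1 / 2 * (q ^ ((1:ℝ) / 2 + 3 * δ) * (q ^ 2 * α ^ 3)) := by ring
    rw [hexpand, hT1, hT2, hA6]
    linarith
  have hfinal : (1 / 2) * q ^ ((1:ℝ) / 2 + 3 * δ) < s := by
    have h1 : (1 / 2) * q ^ ((1:ℝ) / 2 + 3 * δ) * (α ^ 6 + q ^ 2 * α ^ 3) <
        s * (α ^ 6 + q ^ 2 * α ^ 3) := lt_of_lt_of_le hstrict hkey
    exact lt_of_mul_lt_mul_right h1 (le_of_lt hden)
  exact hfinal
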